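/- Let (T_n) be the Tetranacci sequence: T_{n+4} = T_{n+3} + T_{n+2} + T_{n+1} + T_n with T_0 = T_1 = 0, T_2 = 1, T_3 = 1. Let (x_n)_{n≥-2} be a real sequence with x_n ≠ 0 for all n satisfying x_{n+1} = (x_{n-2}·x_{n-1}·x_n + x_{n-1}·x_{n-2} + x_{n-2} + 1)/(x_{n-2}·x_{n-1}·x_n) for all n ≥ 0. Then for all n ≥ 0, x_{2n+1} = (T_{2n+2} + (T_{2n+2} + T_{2n+1})·x_{-2} + (T_{2n+4} - T_{2n+3})·x_{-1}·x_{-2} + T_{2n+3}·x_0·x_{-1}·x_{-2}) / (T_{2n+1} + (T_{2n+1} + T_{2n})·x_{-2} + (T_{2n+3} - T_{2n+2})·x_{-1}·x_{-2} + T_{2n+2}·x_0·x_{-1}·x_{-2}). -/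

import Mathlib

noncomputable def tetg (a b c : ℝ) : ℕ → ℝ
  | 0 => 1
  | 1 => a
  | 2 => a * b
  | 3 => a * b * c
  | (n + 4) => tetg a b c (n + 3) + tetg a b c (n + 2) + tetg a b c (n + 1) + tetg a b c n

theorem tetg_rec (a b c : ℝ) (n : ℕ) :
    tetg a b c (n + 4) = tetg a b c (n + 3) + tetg a b c (n + 2) + tetg a b c (n + 1)
      + tetg a b c n := by
  rfl

theorem tetg_eq (T : ℕ → ℝ)
    (hT0 : T 0 = 0) (hT1 : T 1 = 0) (hT2 : T 2 = 1) (hT3 : T 3 = 1)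
    (hT : ∀ n : ℕ, T (n + 4) = T (n + 3) + T (n + 2) + T (n + 1) + T n)
    (a b c : ℝ) : ∀ k : ℕ,
    tetg a b c (k + 3) = T (k + 1) + (T (k + 1) + T k) * a
      + (T (k + 3) - T (k + 2)) * a * b + T (k + 2) * c * b * a := by
  have key : ∀ k : ℕ,
      (tetg a b c (k + 3) = T (k + 1) + (T (k + 1) + T k) * a
        + (T (k + 3) - T (k + 2)) * a * b + T (k + 2) * c * b * a) ∧
      (tetg a b c (k + 4) = T (k + 2) + (T (k + 2) + T (k + 1)) * a
        + (T (k + 4) - T (k + 3)) * a * b + T (k + 3) * c * b * a) ∧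
      (tetg a b c (k + 5) = T (k + 3) + (T (k + 3) + T (k + 2)) * a
        + (T (k + 5) - T (k + 4)) * a * b + T (k + 4) * c * b * a) ∧
      (tetg a b c (k + 6) = T (k + 4) + (T (k + 4) + T (k + 3)) * a
        + (T (k + 6) - T (k + 5)) * a * b + T (k + 5) * c * b * a) := by
    intro k
    induction k with
    | zero =>
      have h4 : T 4 = 2 := by rw [hT 0]; rw [hT0, hT1, hT2, hT3]; ring
      have h5 : T 5 = 4 := by rw [hT 1]; rw [h4, hT1, hT2, hT3]; ring
      have h6 : T 6 = 8 := by rw [hT 2]; rw [h4, h5, hT2, hT3]; ring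
      refine ⟨?_, ?_, ?_, ?_⟩ <;>
        simp only [tetg, hT0, hT1, hT2, hT3, h4, h5, h6] <;> norm_num <;> ring
    | succ k ih =>
      obtain ⟨h1, h2, h3, h4⟩ := ih
      refine ⟨h2, h3, h4, ?_⟩
      have hr : tetg a b c (k + 7) = tetg a b c (k + 6) + tetg a b c (k + 5)
          + tetg a b c (k + 4) + tetg a b c (k + 3) := tetg_rec a b c (k + 3)
      have e1 := hT (k + 1)
      have e2 := hT (k + 2)
      have e3 := hT (k + 3)
      have e0 := hT k
      have : k + 1 + 6 = k + 7 := by ring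
      rw [this, hr, h1, h2, h3, h4]
      have f1 : k + 1 + 4 = k + 5 := by ring
      have f2 : k + 1 + 5 = k + 6 := by ring
      have f3 : k + 1 + 3 = k + 4 := by ring
      have f4 : k + 1 + 2 = k + 3 := by ring
      have f5 : k + 1 + 1 = k + 2 := by ring
      rw [f1, f2, f3, f4, f5]
      rw [show k + 2 + 4 = k + 6 from by ring] at e2
      rw [show k + 3 + 4 = k + 7 from by ring] at e3
      rw [show k + 1 + 4 = k + 5 from by ring] at e1
      rw [show k + 2 + 3 = k + 5 from by ring, show k + 2 + 2 = k + 4 from by ring,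
        show k + 2 + 1 = k + 3 from by ring] at e2
      rw [show k + 3 + 3 = k + 6 from by ring, show k + 3 + 2 = k + 5 from by ring,
        show k + 3 + 1 = k + 4 from by ring] at e3
      rw [show k + 1 + 3 = k + 4 from by ring, show k + 1 + 2 = k + 3 from by ring,
        show k + 1 + 1 = k + 2 from by ring] at e1
      rw [e3, e2, e1, e0]; ring
  exact fun k => (key k).1

theorem stmt_11 (T : ℕ → ℝ)
    (hT0 : T 0 = 0) (hT1 : T 1 = 0) (hT2 : T 2 = 1) (hT3 : T 3 = 1)
    (hT : ∀ n : ℕ, T (n + 4) = T (n + 3) + T (n + 2) + T (n + 1) + T n)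
    (x : ℤ → ℝ)
    (hx0 : ∀ n : ℤ, -2 ≤ n → x n ≠ 0)
    (hx : ∀ n : ℕ, x ((n : ℤ) + 1) =
      (x ((n : ℤ) - 2) * x ((n : ℤ) - 1) * x n + x ((n : ℤ) - 1) * x ((n : ℤ) - 2)
        + x ((n : ℤ) - 2) + 1) / (x ((n : ℤ) - 2) * x ((n : ℤ) - 1) * x n)) :
    ∀ n : ℕ, x (2 * (n : ℤ) + 1) =
      (T (2 * n + 2) + (T (2 * n + 2) + T (2 * n + 1)) * x (-2)
        + (T (2 * n + 4) - T (2 * n + 3)) * x (-1) * x (-2)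
        + T (2 * n + 3) * x 0 * x (-1) * x (-2))
      / (T (2 * n + 1) + (T (2 * n + 1) + T (2 * n)) * x (-2)
        + (T (2 * n + 3) - T (2 * n + 2)) * x (-1) * x (-2)
        + T (2 * n + 2) * x 0 * x (-1) * x (-2)) := by
  set a := x (-2) with ha
  set b := x (-1) with hb
  set c := x 0 with hc
  have ha0 : a ≠ 0 := hx0 (-2) (by norm_num)
  have hb0 : b ≠ 0 := hx0 (-1) (by norm_num)
  have hc0 : c ≠ 0 := hx0 0 (by norm_num)
  set g := tetg a b c with hg
  -- main induction: g k ≠ 0 and x (k-2) = g (k+1) / g k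
  have key : ∀ k : ℕ,
      (g k ≠ 0 ∧ x ((k : ℤ) - 2) = g (k + 1) / g k) ∧
      (g (k + 1) ≠ 0 ∧ x ((k : ℤ) - 1) = g (k + 2) / g (k + 1)) ∧
      (g (k + 2) ≠ 0 ∧ x ((k : ℤ)) = g (k + 3) / g (k + 2)) := by
    intro k
    induction k with
    | zero =>
      refine ⟨⟨?_, ?_⟩, ⟨?_, ?_⟩, ⟨?_, ?_⟩⟩ <;>
        simp only [hg, tetg, Nat.cast_zero, zero_sub, zero_add] <;>
        norm_num [ha0, hb0, hc0] <;> rfl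
    | succ k ih =>
      obtain ⟨⟨g0, e0⟩, ⟨g1, e1⟩, ⟨g2, e2⟩⟩ := ih
      have xk0 : x ((k : ℤ)) ≠ 0 := hx0 _ (by omega)
      have g3 : g (k + 3) ≠ 0 := by
        intro h
        rw [h, zero_div] at e2
        exact xk0 e2
      refine ⟨⟨g1, ?_⟩, ⟨g2, ?_⟩, ⟨g3, ?_⟩⟩
      · push_cast; rw [show (k : ℤ) + 1 - 2 = (k : ℤ) - 1 from by ring]; exact e1
      · push_cast; rw [show (k : ℤ) + 1 - 1 = (k : ℤ) from by ring]; exact e2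
      · push_cast
        have hrec := hx k
        rw [e0, e1, e2] at hrec
        rw [hrec]
        rw [show g (k + 1 + 3) = g (k + 3) + g (k + 2) + g (k + 1) + g k from
          tetg_rec a b c k]
        field_simp
  intro n
  obtain ⟨_, _, ⟨gnz, heq⟩⟩ := key (2 * n + 1)
  have hx' : x (2 * (n : ℤ) + 1) = g (2 * n + 4) / g (2 * n + 3) := by
    rw [show (2 * (n : ℤ) + 1) = ((2 * n + 1 : ℕ) : ℤ) from by push_cast; ring, heq,
      show 2 * n + 1 + 3 = 2 * n + 4 from by ring, show 2 * n + 1 + 2 = 2 * n + 3 from by ring]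
  rw [hx', hg]
  have hnum := tetg_eq T hT0 hT1 hT2 hT3 hT a b c (2 * n + 1)
  have hden := tetg_eq T hT0 hT1 hT2 hT3 hT a b c (2 * n)
  rw [show 2 * n + 1 + 3 = 2 * n + 4 from by ring, show 2 * n + 1 + 2 = 2 * n + 3 from by ring,
    show 2 * n + 1 + 1 = 2 * n + 2 from by ring] at hnum
  rw [hnum, hden]
  ring
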